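/- For the stationary hard-wall reflected processes \widehat{l} and \widehat{r} (forward and backward), at every site n ∈ ℤ the sign of \widehat{l}_{n-1} + 2h_n + \widehat{r}_{n+1} equals the Fisher configuration s^{(F)}_n built from the Γ-extrema of S: it is +1 when n lies strictly inside a Γ-ascending stretch of height strictly greater than Γ, −1 when n lies strictly inside a Γ-descending stretch of height strictly greater than Γ, and 0 otherwise (between adjacent Γ-extrema of the same type, or on stretches of height exactly Γ). -/

import Mathlib

/-- Hard-wall projection onto `[-Γ, Γ]`. -/
noncomputable def hatb (Γ x : ℝ) : ℝ := max (-Γ) (min Γ x)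

/-- `u` is a `Γ`-maximum of `S` over `ℤ`: there are `s ≤ u ≤ t` with `S`
maximal at `u` on `[s,t]`, `S_s ≤ S_u − Γ` and `S_t ≤ S_u − Γ`. -/
def IsGammaMax (S : ℤ → ℝ) (Γ : ℝ) (u : ℤ) : Prop :=
  ∃ s t : ℤ, s ≤ u ∧ u ≤ t ∧ (∀ i : ℤ, s ≤ i → i ≤ t → S i ≤ S u) ∧
    S s ≤ S u - Γ ∧ S t ≤ S u - Γ

/-- `u` is a `Γ`-minimum of `S` over `ℤ`. -/
def IsGammaMin (S : ℤ → ℝ) (Γ : ℝ) (u : ℤ) : Prop :=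
  IsGammaMax (fun n => -S n) Γ u

/-- `n` lies strictly inside a `Γ`-ascending stretch of height strictly
greater than `Γ`: there are a `Γ`-minimum `u` (last of its block) and a
`Γ`-maximum `v` (first of the next block, i.e. with no `Γ`-extrema strictly in
between) with `u < n ≤ v` and `S_v − S_u > Γ`. -/
def FisherPlus (S : ℤ → ℝ) (Γ : ℝ) (n : ℤ) : Prop :=
  ∃ u v : ℤ, IsGammaMin S Γ u ∧ IsGammaMax S Γ v ∧ u < n ∧ n ≤ v ∧ Γ < S v - S u ∧
    ∀ w : ℤ, u < w → w < v → ¬ IsGammaMin S Γ w ∧ ¬ IsGammaMax S Γ w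

/-- `n` lies strictly inside a `Γ`-descending stretch of height strictly greater than `Γ`. -/
def FisherMinus (S : ℤ → ℝ) (Γ : ℝ) (n : ℤ) : Prop :=
  FisherPlus (fun m => -S m) Γ n

open Classical in
/-- The Fisher domain-wall configuration `s^{(F)} ∈ {-1, 0, +1}^ℤ`. -/
noncomputable def fisherConfig (S : ℤ → ℝ) (Γ : ℝ) (n : ℤ) : ℝ :=
  if FisherPlus S Γ n then 1 else if FisherMinus S Γ n then -1 else 0

namespace Fisher16

variable {Γ : ℝ}

lemma hatb_le (hΓ : 0 < Γ) (x : ℝ) : hatb Γ x ≤ Γ := by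
  unfold hatb
  rcases le_total Γ x with h1 | h1 <;>
    simp [min_def, max_def] <;> split_ifs <;> linarith

lemma le_hatb (x : ℝ) : -Γ ≤ hatb Γ x := le_max_left _ _

lemma hatb_mono {x y : ℝ} (hxy : x ≤ y) : hatb Γ x ≤ hatb Γ y :=
  max_le_max le_rfl (min_le_min le_rfl hxy)

lemma hatb_of_mem {x : ℝ} (h1 : -Γ ≤ x) (h2 : x ≤ Γ) : hatb Γ x = x := by
  unfold hatb
  rw [min_eq_right h2, max_eq_right h1]

lemma hatb_of_ge (hΓ : 0 < Γ) {x : ℝ} (h : Γ ≤ x) : hatb Γ x = Γ := by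
  unfold hatb
  rw [min_eq_left h, max_eq_right (by linarith)]

lemma hatb_of_le (hΓ : 0 < Γ) {x : ℝ} (h : x ≤ -Γ) : hatb Γ x = -Γ := by
  unfold hatb
  rw [max_eq_left]
  exact min_le_of_right_le h

lemma hatb_neg (hΓ : 0 < Γ) (x : ℝ) : hatb Γ (-x) = -hatb Γ x := by
  rcases le_total Γ x with h1 | h1
  · rw [hatb_of_le hΓ (show -x ≤ -Γ by linarith), hatb_of_ge hΓ h1]
  · rcases le_total x (-Γ) with h2 | h2
    · rw [hatb_of_ge hΓ (show Γ ≤ -x by linarith), hatb_of_le hΓ h2]; ring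
    · rw [hatb_of_mem (show -Γ ≤ -x by linarith) (show -x ≤ Γ by linarith),
        hatb_of_mem h2 h1]

lemma hatb_ge_min (x : ℝ) : min Γ x ≤ hatb Γ x := le_max_right _ _

/-- existence of an argmax of `S` on `[a,b] ⊆ ℤ`. -/
lemma exists_max_Icc (S : ℤ → ℝ) {a b : ℤ} (hab : a ≤ b) :
    ∃ x, a ≤ x ∧ x ≤ b ∧ ∀ i, a ≤ i → i ≤ b → S i ≤ S x := by
  obtain ⟨x, hx, hmax⟩ := Finset.exists_max_image (Finset.Icc a b) S
    (by rwa [Finset.nonempty_Icc])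
  rw [Finset.mem_Icc] at hx
  exact ⟨x, hx.1, hx.2, fun i h1 h2 => hmax i (Finset.mem_Icc.mpr ⟨h1, h2⟩)⟩

lemma exists_min_Icc (S : ℤ → ℝ) {a b : ℤ} (hab : a ≤ b) :
    ∃ x, a ≤ x ∧ x ≤ b ∧ ∀ i, a ≤ i → i ≤ b → S x ≤ S i := by
  obtain ⟨x, hx1, hx2, hx3⟩ := exists_max_Icc (fun k => -S k) hab
  exact ⟨x, hx1, hx2, fun i h1 h2 => by have := hx3 i h1 h2; simpa using this⟩

section Chains

variable {S h L R : ℤ → ℝ}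

/-- Forward reset to the top: if on `[a,b]`, `S a` is the min, `S b` the max,
and the rise is at least `Γ`, then `L b = Γ`. -/
lemma FRtop (hΓ : 0 < Γ) (hs : ∀ k : ℤ, S k - S (k-1) = h k)
    (hL : ∀ k : ℤ, L k = hatb Γ (L (k - 1) + 2 * h k))
    {a b : ℤ} (hab : a ≤ b)
    (hmin : ∀ i, a ≤ i → i ≤ b → S a ≤ S i)
    (hmax : ∀ i, a ≤ i → i ≤ b → S i ≤ S b)
    (hgap : Γ ≤ S b - S a) : L b = Γ := by
  have hLle : ∀ k : ℤ, L k ≤ Γ := fun k => by rw [hL k]; exact hatb_le hΓ _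
  have hLge : ∀ k : ℤ, -Γ ≤ L k := fun k => by rw [hL k]; exact le_hatb _
  have key : ∀ j, a ≤ j → j ≤ b → ∃ x, a ≤ x ∧ x ≤ j ∧
      (∀ i, a ≤ i → i ≤ j → S i ≤ S x) ∧
      min (-Γ + 2*(S j - S a)) (Γ - 2*(S x - S j)) ≤ L j := by
    refine fun j hj => Int.le_induction (motive := fun j _ => j ≤ b → ∃ x, a ≤ x ∧ x ≤ j ∧
      (∀ i, a ≤ i → i ≤ j → S i ≤ S x) ∧
      min (-Γ + 2*(S j - S a)) (Γ - 2*(S x - S j)) ≤ L j) ?_ ?_ j hj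
    · intro _
      refine ⟨a, le_rfl, le_rfl, ?_, ?_⟩
      · intro i h1 h2
        have hia : i = a := le_antisymm h2 h1
        rw [hia]
      · have h1 : min (-Γ + 2*(S a - S a)) (Γ - 2*(S a - S a)) ≤ -Γ :=
          min_le_of_left_le (by linarith)
        linarith [hLge a]
    · intro j hj ih hj1b
      obtain ⟨x, hx1, hx2, hx3, hx4⟩ := ih (by omega)
      have hrec : L (j+1) = hatb Γ (L j + 2 * h (j+1)) := by
        have := hL (j+1); simpa using this
      have hsj : S (j+1) - S j = h (j+1) := by
        have := hs (j+1); simpa using this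
      -- new argmax witness
      obtain ⟨x', hx'1, hx'2, hx'max, hx'ge⟩ :
          ∃ x', a ≤ x' ∧ x' ≤ j+1 ∧ (∀ i, a ≤ i → i ≤ j+1 → S i ≤ S x') ∧
            S x ≤ S x' ∧ S (j+1) ≤ S x' := by
        rcases le_total (S (j+1)) (S x) with hc | hc
        · refine ⟨x, hx1, by omega, ?_, le_rfl, hc⟩
          intro i h1 h2
          rcases lt_or_ge i (j+1) with h3 | h3
          · exact hx3 i h1 (by omega)
          · have : i = j + 1 := by omega
            rw [this]; exact hc
        · refine ⟨j+1, by omega, le_rfl, ?_, hc, le_rfl⟩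
          intro i h1 h2
          rcases lt_or_ge i (j+1) with h3 | h3
          · exact le_trans (hx3 i h1 (by omega)) hc
          · have : i = j + 1 := by omega
            rw [this]
      obtain ⟨hx'xge, hx'j1⟩ := hx'ge
      set A' := -Γ + 2*(S (j+1) - S a) with hA'
      set B' := Γ - 2*(S x - S (j+1)) with hB'
      set B'' := Γ - 2*(S x' - S (j+1)) with hB''
      have hmin_add : min (-Γ + 2*(S j - S a)) (Γ - 2*(S x - S j)) + 2 * h (j+1)
          = min A' B' := by
        rw [← min_add_add_right]
        congr 1 <;> [skip; skip] <;> simp only [hA', hB'] <;> linarith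
      have hL1 : hatb Γ (min A' B') ≤ L (j+1) := by
        rw [hrec]
        exact hatb_mono (by linarith [hx4])
      have hB''Γ : B'' ≤ Γ := by simp only [hB'']; linarith
      have hB''B' : B'' ≤ B' := by simp only [hB'', hB']; linarith
      have step2 : min A' B'' ≤ min Γ (min A' B') := by
        refine le_min (le_trans (min_le_right _ _) hB''Γ)
          (le_min (min_le_left _ _) (le_trans (min_le_right _ _) hB''B'))
      refine ⟨x', hx'1, hx'2, hx'max, ?_⟩
      calc min A' B'' ≤ min Γ (min A' B') := step2
        _ ≤ hatb Γ (min A' B') := hatb_ge_min _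
        _ ≤ L (j+1) := hL1
  obtain ⟨x, hx1, hx2, hx3, hx4⟩ := key b hab le_rfl
  have h1 : S x ≤ S b := hmax x hx1 hx2
  have h2 : Γ ≤ min (-Γ + 2*(S b - S a)) (Γ - 2*(S x - S b)) :=
    le_min (by linarith) (by linarith)
  exact le_antisymm (hLle b) (by linarith)

/-- Forward propagation from the top barrier. -/
lemma FPtop (hΓ : 0 < Γ) (hs : ∀ k : ℤ, S k - S (k-1) = h k)
    (hL : ∀ k : ℤ, L k = hatb Γ (L (k - 1) + 2 * h k))
    {a b : ℤ} (hab : a ≤ b) (ha : L a = Γ)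
    (hcond : ∀ k, a < k → k ≤ b → ∀ i, a ≤ i → i ≤ k → S i - S k ≤ Γ) :
    ∃ x, a ≤ x ∧ x ≤ b ∧ (∀ i, a ≤ i → i ≤ b → S i ≤ S x) ∧
      L b = Γ - 2*(S x - S b) := by
  have key : ∀ j, a ≤ j → j ≤ b → ∃ x, a ≤ x ∧ x ≤ j ∧
      (∀ i, a ≤ i → i ≤ j → S i ≤ S x) ∧ L j = Γ - 2*(S x - S j) := by
    refine fun j hj => Int.le_induction (motive := fun j _ => j ≤ b → ∃ x, a ≤ x ∧ x ≤ j ∧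
      (∀ i, a ≤ i → i ≤ j → S i ≤ S x) ∧ L j = Γ - 2*(S x - S j)) ?_ ?_ j hj
    · intro _
      refine ⟨a, le_rfl, le_rfl, ?_, by rw [ha]; ring⟩
      intro i h1 h2
      have hia : i = a := le_antisymm h2 h1
      rw [hia]
    · intro j hj ih hj1b
      obtain ⟨x, hx1, hx2, hx3, hx4⟩ := ih (by omega)
      have hrec : L (j+1) = hatb Γ (L j + 2 * h (j+1)) := by
        have := hL (j+1); simpa using this
      have hsj : S (j+1) - S j = h (j+1) := by
        have := hs (j+1); simpa using this
      have harg : L j + 2 * h (j+1) = Γ - 2*(S x - S (j+1)) := by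
        rw [hx4]; linarith
      rcases le_total (S x) (S (j+1)) with hc | hc
      · refine ⟨j+1, by omega, le_rfl, ?_, ?_⟩
        · intro i h1 h2
          rcases lt_or_ge i (j+1) with h3 | h3
          · exact le_trans (hx3 i h1 (by omega)) hc
          · have : i = j + 1 := by omega
            rw [this]
        · rw [hrec, harg, hatb_of_ge hΓ (by linarith)]; ring_nf
      · have hge : -Γ ≤ Γ - 2*(S x - S (j+1)) := by
          have := hcond (j+1) (by omega) hj1b x hx1 (by omega)
          linarith
        refine ⟨x, hx1, by omega, ?_, ?_⟩
        · intro i h1 h2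
          rcases lt_or_ge i (j+1) with h3 | h3
          · exact hx3 i h1 (by omega)
          · have : i = j + 1 := by omega
            rw [this]; exact hc
        · rw [hrec, harg, hatb_of_mem hge (by linarith)]
  exact key b hab le_rfl

/-- Backward reset to the top. -/
lemma BRtop (hΓ : 0 < Γ) (hs : ∀ k : ℤ, S k - S (k-1) = h k)
    (hR : ∀ k : ℤ, R k = hatb Γ (R (k + 1) + 2 * h k))
    {c d : ℤ} (hcd : c ≤ d)
    (hmin : ∀ i, c ≤ i → i ≤ d → S c ≤ S i)
    (hmax : ∀ i, c ≤ i → i ≤ d → S i ≤ S d)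
    (hgap : Γ ≤ S d - S c) : R (c+1) = Γ := by
  have hRle : ∀ k : ℤ, R k ≤ Γ := fun k => by rw [hR k]; exact hatb_le hΓ _
  have hRge : ∀ k : ℤ, -Γ ≤ R k := fun k => by rw [hR k]; exact le_hatb _
  have key : ∀ j, c+1 ≤ j → j ≤ d+1 → ∃ y, j-1 ≤ y ∧ y ≤ d ∧
      (∀ i, j-1 ≤ i → i ≤ d → S y ≤ S i) ∧
      min (-Γ + 2*(S d - S (j-1))) (Γ - 2*(S (j-1) - S y)) ≤ R j := by
    have down : ∀ j, j ≤ d+1 → c+1 ≤ j → ∃ y, j-1 ≤ y ∧ y ≤ d ∧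
        (∀ i, j-1 ≤ i → i ≤ d → S y ≤ S i) ∧
        min (-Γ + 2*(S d - S (j-1))) (Γ - 2*(S (j-1) - S y)) ≤ R j := by
      refine fun j hj => Int.le_induction_down (motive := fun j _ => c+1 ≤ j → ∃ y, j-1 ≤ y ∧ y ≤ d ∧
        (∀ i, j-1 ≤ i → i ≤ d → S y ≤ S i) ∧
        min (-Γ + 2*(S d - S (j-1))) (Γ - 2*(S (j-1) - S y)) ≤ R j) ?_ ?_ j hj
      · intro _
        refine ⟨d, by omega, le_rfl, ?_, ?_⟩
        · intro i h1 h2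
          have hid : i = d := by omega
          rw [hid]
        · have h1 : min (-Γ + 2*(S d - S (d+1-1))) (Γ - 2*(S (d+1-1) - S d)) ≤ -Γ := by
            apply min_le_of_left_le
            have : (d+1-1 : ℤ) = d := by ring
            rw [this]; linarith
          linarith [hRge (d+1)]
      · intro j hj ih hjc
        obtain ⟨y, hy1, hy2, hy3, hy4⟩ := ih (by omega)
        have hrec : R (j-1) = hatb Γ (R j + 2 * h (j-1)) := by
          have := hR (j-1); simpa using this
        have hsj : S (j-1) - S (j-2) = h (j-1) := by
          have := hs (j-1)
          have e : (j-1-1:ℤ) = j-2 := by ring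
          rwa [e] at this
        obtain ⟨y', hy'1, hy'2, hy'max, hy'yge, hy'j2⟩ :
            ∃ y', j-2 ≤ y' ∧ y' ≤ d ∧ (∀ i, j-2 ≤ i → i ≤ d → S y' ≤ S i) ∧
              S y' ≤ S y ∧ S y' ≤ S (j-2) := by
          rcases le_total (S y) (S (j-2)) with hc' | hc'
          · refine ⟨y, by omega, hy2, ?_, le_rfl, hc'⟩
            intro i h1 h2
            rcases lt_or_ge i (j-1) with h3 | h3
            · have : i = j - 2 := by omega
              rw [this]; exact hc'
            · exact hy3 i (by omega) h2
          · refine ⟨j-2, le_rfl, by omega, ?_, hc', le_rfl⟩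
            intro i h1 h2
            rcases lt_or_ge i (j-1) with h3 | h3
            · have : i = j - 2 := by omega
              rw [this]
            · exact le_trans hc' (hy3 i (by omega) h2)
        set A' := -Γ + 2*(S d - S (j-2)) with hA'
        set B' := Γ - 2*(S (j-2) - S y) with hB'
        set B'' := Γ - 2*(S (j-2) - S y') with hB''
        have hmin_add : min (-Γ + 2*(S d - S (j-1))) (Γ - 2*(S (j-1) - S y)) + 2 * h (j-1)
            = min A' B' := by
          rw [← min_add_add_right]
          congr 1 <;> simp only [hA', hB'] <;> linarith
        have hL1 : hatb Γ (min A' B') ≤ R (j-1) := by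
          rw [hrec]
          exact hatb_mono (by linarith [hy4])
        have hB''Γ : B'' ≤ Γ := by simp only [hB'']; linarith
        have hB''B' : B'' ≤ B' := by simp only [hB'', hB']; linarith
        refine ⟨y', by omega, hy'2, by
          intro i h1 h2; exact hy'max i (by omega) h2, ?_⟩
        have step2 : min A' B'' ≤ min Γ (min A' B') :=
          le_min (le_trans (min_le_right _ _) hB''Γ)
            (le_min (min_le_left _ _) (le_trans (min_le_right _ _) hB''B'))
        have hj2 : (j - 1 - 1 : ℤ) = j - 2 := by ring
        rw [hj2]
        calc min A' B'' ≤ min Γ (min A' B') := step2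
          _ ≤ hatb Γ (min A' B') := hatb_ge_min _
          _ ≤ R (j-1) := hL1
    exact fun j h1 h2 => down j h2 h1
  obtain ⟨y, hy1, hy2, hy3, hy4⟩ := key (c+1) le_rfl (by omega)
  have hyc : (c+1-1 : ℤ) = c := by ring
  rw [hyc] at hy1 hy3 hy4
  have h1 : S c ≤ S y := hmin y (by omega) hy2
  have h2 : Γ ≤ min (-Γ + 2*(S d - S c)) (Γ - 2*(S c - S y)) :=
    le_min (by linarith) (by linarith)
  exact le_antisymm (hRle (c+1)) (by linarith)

/-- Backward propagation from the top barrier. -/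
lemma BPtop (hΓ : 0 < Γ) (hs : ∀ k : ℤ, S k - S (k-1) = h k)
    (hR : ∀ k : ℤ, R k = hatb Γ (R (k + 1) + 2 * h k))
    {c d : ℤ} (hcd : c ≤ d) (hd : R (d+1) = Γ)
    (hcond : ∀ k, c ≤ k → k ≤ d → ∀ i, k ≤ i → i ≤ d → S k - S i ≤ Γ) :
    ∃ y, c ≤ y ∧ y ≤ d ∧ (∀ i, c ≤ i → i ≤ d → S y ≤ S i) ∧
      R (c+1) = Γ - 2*(S c - S y) := by
  have key : ∀ j, j ≤ d+1 → c+1 ≤ j → ∃ y, j-1 ≤ y ∧ y ≤ d ∧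
      (∀ i, j-1 ≤ i → i ≤ d → S y ≤ S i) ∧ R j = Γ - 2*(S (j-1) - S y) := by
    refine fun j hj => Int.le_induction_down (motive := fun j _ => c+1 ≤ j → ∃ y, j-1 ≤ y ∧ y ≤ d ∧
      (∀ i, j-1 ≤ i → i ≤ d → S y ≤ S i) ∧ R j = Γ - 2*(S (j-1) - S y)) ?_ ?_ j hj
    · intro _
      refine ⟨d, by omega, le_rfl, ?_, ?_⟩
      · intro i h1 h2
        have hid : i = d := by omega
        rw [hid]
      · have hdd : (d+1-1 : ℤ) = d := by ring
        rw [hdd, hd]; ring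
    · intro j hj ih hjc
      obtain ⟨y, hy1, hy2, hy3, hy4⟩ := ih (by omega)
      have hrec : R (j-1) = hatb Γ (R j + 2 * h (j-1)) := by
        have := hR (j-1); simpa using this
      have hsj : S (j-1) - S (j-2) = h (j-1) := by
        have := hs (j-1)
        have e : (j-1-1:ℤ) = j-2 := by ring
        rwa [e] at this
      have harg : R j + 2 * h (j-1) = Γ - 2*(S (j-2) - S y) := by
        rw [hy4]; linarith
      have hj2 : (j - 1 - 1 : ℤ) = j - 2 := by ring
      rcases le_total (S y) (S (j-2)) with hc' | hc'
      · have hge : -Γ ≤ Γ - 2*(S (j-2) - S y) := by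
          have := hcond (j-2) (by omega) (by omega) y (by omega) hy2
          linarith
        refine ⟨y, by omega, hy2, ?_, ?_⟩
        · intro i h1 h2
          rw [hj2] at h1
          rcases lt_or_ge i (j-1) with h3 | h3
          · have : i = j - 2 := by omega
            rw [this]; exact hc'
          · exact hy3 i (by omega) h2
        · rw [hj2, hrec, harg, hatb_of_mem hge (by linarith)]
      · refine ⟨j-2, by omega, by omega, ?_, ?_⟩
        · intro i h1 h2
          rw [hj2] at h1
          rcases lt_or_ge i (j-1) with h3 | h3
          · have : i = j - 2 := by omega
            rw [this]
          · exact le_trans hc' (hy3 i (by omega) h2)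
        · rw [hj2, hrec, harg, hatb_of_ge hΓ (by linarith)]; ring_nf
  obtain ⟨y, hy1, hy2, hy3, hy4⟩ := key (c+1) (by omega) le_rfl
  have hyc : (c+1-1 : ℤ) = c := by ring
  rw [hyc] at hy1 hy3 hy4
  exact ⟨y, hy1, hy2, hy3, hy4⟩

end Chains

section Chains2

variable {S h L R : ℤ → ℝ}

lemma neg_hs (hs : ∀ k : ℤ, S k - S (k-1) = h k) :
    ∀ k : ℤ, (fun m => -S m) k - (fun m => -S m) (k-1) = (fun m => -h m) k := by
  intro k
  have := hs k
  simp only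
  linarith

lemma neg_hL (hΓ : 0 < Γ) (hL : ∀ k : ℤ, L k = hatb Γ (L (k - 1) + 2 * h k)) :
    ∀ k : ℤ, (fun m => -L m) k = hatb Γ ((fun m => -L m) (k - 1) + 2 * (fun m => -h m) k) := by
  intro k
  simp only
  have e : (-L (k-1) + 2 * (-h k)) = -(L (k-1) + 2 * h k) := by ring
  rw [e, hatb_neg hΓ, ← hL k]

lemma neg_hR (hΓ : 0 < Γ) (hR : ∀ k : ℤ, R k = hatb Γ (R (k + 1) + 2 * h k)) :
    ∀ k : ℤ, (fun m => -R m) k = hatb Γ ((fun m => -R m) (k + 1) + 2 * (fun m => -h m) k) := by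
  intro k
  simp only
  have e : (-R (k+1) + 2 * (-h k)) = -(R (k+1) + 2 * h k) := by ring
  rw [e, hatb_neg hΓ, ← hR k]

/-- Forward reset to the bottom. -/
lemma FRbot (hΓ : 0 < Γ) (hs : ∀ k : ℤ, S k - S (k-1) = h k)
    (hL : ∀ k : ℤ, L k = hatb Γ (L (k - 1) + 2 * h k))
    {a b : ℤ} (hab : a ≤ b)
    (hmax : ∀ i, a ≤ i → i ≤ b → S i ≤ S a)
    (hmin : ∀ i, a ≤ i → i ≤ b → S b ≤ S i)
    (hgap : Γ ≤ S a - S b) : L b = -Γ := by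
  have key := FRtop hΓ (neg_hs hs) (neg_hL hΓ hL) hab
    (fun i h1 h2 => by show -S a ≤ -S i; linarith [hmax i h1 h2])
    (fun i h1 h2 => by show -S i ≤ -S b; linarith [hmin i h1 h2])
    (by show Γ ≤ -S b - -S a; linarith)
  have key2 : -L b = Γ := key
  linarith

/-- Forward propagation from the bottom barrier. -/
lemma FPbot (hΓ : 0 < Γ) (hs : ∀ k : ℤ, S k - S (k-1) = h k)
    (hL : ∀ k : ℤ, L k = hatb Γ (L (k - 1) + 2 * h k))
    {a b : ℤ} (hab : a ≤ b) (ha : L a = -Γ)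
    (hcond : ∀ k, a < k → k ≤ b → ∀ i, a ≤ i → i ≤ k → S k - S i ≤ Γ) :
    ∃ y, a ≤ y ∧ y ≤ b ∧ (∀ i, a ≤ i → i ≤ b → S y ≤ S i) ∧
      L b = -Γ + 2*(S b - S y) := by
  obtain ⟨x, hx1, hx2, hx3, hx4⟩ := FPtop hΓ (neg_hs hs) (neg_hL hΓ hL) hab
    (by show -L a = Γ; rw [ha]; ring)
    (fun k hk1 hk2 i hi1 hi2 => by
      show -S i - -S k ≤ Γ
      linarith [hcond k hk1 hk2 i hi1 hi2])
  refine ⟨x, hx1, hx2, fun i h1 h2 => ?_, ?_⟩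
  · have h3 : -S i ≤ -S x := hx3 i h1 h2
    linarith
  · have h4 : -L b = Γ - 2*(-S x - -S b) := hx4
    linarith

/-- Backward reset to the bottom. -/
lemma BRbot (hΓ : 0 < Γ) (hs : ∀ k : ℤ, S k - S (k-1) = h k)
    (hR : ∀ k : ℤ, R k = hatb Γ (R (k + 1) + 2 * h k))
    {c d : ℤ} (hcd : c ≤ d)
    (hmax : ∀ i, c ≤ i → i ≤ d → S i ≤ S c)
    (hmin : ∀ i, c ≤ i → i ≤ d → S d ≤ S i)
    (hgap : Γ ≤ S c - S d) : R (c+1) = -Γ := by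
  have key := BRtop hΓ (neg_hs hs) (neg_hR hΓ hR) hcd
    (fun i h1 h2 => by show -S c ≤ -S i; linarith [hmax i h1 h2])
    (fun i h1 h2 => by show -S i ≤ -S d; linarith [hmin i h1 h2])
    (by show Γ ≤ -S d - -S c; linarith)
  have key2 : -R (c+1) = Γ := key
  linarith

/-- Backward propagation from the bottom barrier. -/
lemma BPbot (hΓ : 0 < Γ) (hs : ∀ k : ℤ, S k - S (k-1) = h k)
    (hR : ∀ k : ℤ, R k = hatb Γ (R (k + 1) + 2 * h k))
    {c d : ℤ} (hcd : c ≤ d) (hd : R (d+1) = -Γ)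
    (hcond : ∀ k, c ≤ k → k ≤ d → ∀ i, k ≤ i → i ≤ d → S i - S k ≤ Γ) :
    ∃ x, c ≤ x ∧ x ≤ d ∧ (∀ i, c ≤ i → i ≤ d → S i ≤ S x) ∧
      R (c+1) = -Γ + 2*(S x - S c) := by
  obtain ⟨x, hx1, hx2, hx3, hx4⟩ := BPtop hΓ (neg_hs hs) (neg_hR hΓ hR) hcd
    (by show -R (d+1) = Γ; rw [hd]; ring)
    (fun k hk1 hk2 i hi1 hi2 => by
      show -S k - -S i ≤ Γ
      linarith [hcond k hk1 hk2 i hi1 hi2])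
  refine ⟨x, hx1, hx2, fun i h1 h2 => ?_, ?_⟩
  · have h3 : -S x ≤ -S i := hx3 i h1 h2
    linarith
  · have h4 : -R (c+1) = Γ - 2*(-S c - -S x) := hx4
    linarith

end Chains2


section Extrema

variable {S : ℤ → ℝ} {u v : ℤ}

lemma gammaMin_elim (h : IsGammaMin S Γ u) :
    ∃ s t : ℤ, s ≤ u ∧ u ≤ t ∧ (∀ i, s ≤ i → i ≤ t → S u ≤ S i) ∧
      S u + Γ ≤ S s ∧ S u + Γ ≤ S t := by
  obtain ⟨s, t, h1, h2, h3, h4, h5⟩ := h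
  refine ⟨s, t, h1, h2, fun i hi1 hi2 => ?_, ?_, ?_⟩
  · have e : -S i ≤ -S u := h3 i hi1 hi2
    linarith
  · have e : -S s ≤ -S u - Γ := h4
    linarith
  · have e : -S t ≤ -S u - Γ := h5
    linarith

lemma gammaMin_intro {s t : ℤ} (h1 : s ≤ u) (h2 : u ≤ t)
    (h3 : ∀ i, s ≤ i → i ≤ t → S u ≤ S i) (h4 : S u + Γ ≤ S s) (h5 : S u + Γ ≤ S t) :
    IsGammaMin S Γ u :=
  ⟨s, t, h1, h2, fun i hi1 hi2 => by show -S i ≤ -S u; linarith [h3 i hi1 hi2],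
    by show -S s ≤ -S u - Γ; linarith, by show -S t ≤ -S u - Γ; linarith⟩

lemma not_min_and_max (hΓ : 0 < Γ) (hmin : IsGammaMin S Γ u) (hmax : IsGammaMax S Γ u) :
    False := by
  obtain ⟨s, t, h1, h2, h3, h4, h5⟩ := gammaMin_elim hmin
  obtain ⟨s', t', g1, g2, g3, g4, g5⟩ := hmax
  rcases le_total s' s with hc | hc
  · have := g3 s hc (by omega)
    linarith
  · have := h3 s' hc (by omega)
    linarith

lemma isGammaMax_neg : IsGammaMax (fun k => -S k) Γ u ↔ IsGammaMin S Γ u := Iff.rfl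

lemma isGammaMin_neg : IsGammaMin (fun k => -S k) Γ u ↔ IsGammaMax S Γ u := by
  constructor
  · rintro ⟨s, t, h1, h2, h3, h4, h5⟩
    refine ⟨s, t, h1, h2, fun i hi1 hi2 => ?_, ?_, ?_⟩
    · have e : - -S i ≤ - -S u := h3 i hi1 hi2
      linarith
    · have e : - -S s ≤ - -S u - Γ := h4
      linarith
    · have e : - -S t ≤ - -S u - Γ := h5
      linarith
  · rintro ⟨s, t, h1, h2, h3, h4, h5⟩
    refine ⟨s, t, h1, h2, fun i hi1 hi2 => ?_, ?_, ?_⟩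
    · show - -S i ≤ - -S u
      linarith [h3 i hi1 hi2]
    · show - -S s ≤ - -S u - Γ
      linarith
    · show - -S t ≤ - -S u - Γ
      linarith

/-- Adjacent min→max: the left end is the minimum on `[u,v]`. -/
lemma adj_asc_min (hΓ : 0 < Γ) (hu : IsGammaMin S Γ u) (hv : IsGammaMax S Γ v) (huv : u ≤ v)
    (hne : ∀ w, u < w → w < v → ¬ IsGammaMin S Γ w ∧ ¬ IsGammaMax S Γ w) :
    ∀ i, u ≤ i → i ≤ v → S u ≤ S i := by
  obtain ⟨y, hy1, hy2, hy3⟩ := exists_min_Icc S huv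
  suffices hy : S u ≤ S y by
    intro i h1 h2
    linarith [hy3 i h1 h2]
  by_contra hlt
  push_neg at hlt
  obtain ⟨s, t, hs1, hs2, hmin3, hs4, hs5⟩ := gammaMin_elim hu
  obtain ⟨s', t', g1, g2, g3, g4, g5⟩ := hv
  have hty : t < y := by
    by_contra hh
    push_neg at hh
    have := hmin3 y (by omega) hh
    linarith
  have hSv : S y + Γ ≤ S v := by
    rcases le_or_gt y s' with hc | hc
    · have h6 : S y ≤ S s' := hy3 s' (by omega) g1
      linarith
    · rcases le_or_gt s' t with hd | hd
      · have h7 : S t ≤ S v := g3 t hd (by omega)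
        linarith
      · have h6 : S y ≤ S s' := hy3 s' (by omega) (by omega)
        linarith
  have huy : u < y := by
    rcases lt_or_ge u y with hh | hh
    · exact hh
    · have : y = u := by omega
      rw [this] at hlt
      linarith
  have hyv : y < v := by
    rcases lt_or_ge y v with hh | hh
    · exact hh
    · have : y = v := by omega
      rw [this] at hSv
      linarith
  exact (hne y huy hyv).1 (gammaMin_intro (by omega : t ≤ y) (by omega : y ≤ v)
    (fun i h1 h2 => hy3 i (by omega) h2) (by linarith) hSv)

/-- Adjacent min→max: the right end is the maximum on `[u,v]`. -/
lemma adj_asc_max (hΓ : 0 < Γ) (hu : IsGammaMin S Γ u) (hv : IsGammaMax S Γ v) (huv : u ≤ v)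
    (hne : ∀ w, u < w → w < v → ¬ IsGammaMin S Γ w ∧ ¬ IsGammaMax S Γ w) :
    ∀ i, u ≤ i → i ≤ v → S i ≤ S v := by
  obtain ⟨y, hy1, hy2, hy3⟩ := exists_max_Icc S huv
  suffices hy : S y ≤ S v by
    intro i h1 h2
    linarith [hy3 i h1 h2]
  by_contra hlt
  push_neg at hlt
  obtain ⟨s, t, hs1, hs2, hmin3, hs4, hs5⟩ := gammaMin_elim hu
  obtain ⟨s', t', g1, g2, g3, g4, g5⟩ := hv
  have hys : y < s' := by
    by_contra hh
    push_neg at hh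
    have := g3 y hh (by omega)
    linarith
  have hSy : S u + Γ ≤ S y := by
    rcases le_or_gt t v with hc | hc
    · have h6 : S t ≤ S y := hy3 t hs2 hc
      linarith
    · have h6 : S u ≤ S s' := hmin3 s' (by omega) (by omega)
      linarith
  have huy : u < y := by
    rcases lt_or_ge u y with hh | hh
    · exact hh
    · have : y = u := by omega
      rw [this] at hSy
      linarith
  have hyv : y < v := by
    rcases lt_or_ge y v with hh | hh
    · exact hh
    · have : y = v := by omega
      rw [this] at hlt
      linarith
  refine (hne y huy hyv).2 ⟨u, s', by omega, by omega, ?_, by linarith, by linarith⟩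
  intro i h1 h2
  exact hy3 i h1 (by omega)

/-- Adjacent min→max: the rise is at least `Γ`. -/
lemma adj_asc_gap (hΓ : 0 < Γ) (hu : IsGammaMin S Γ u) (hv : IsGammaMax S Γ v) (huv : u ≤ v)
    (hne : ∀ w, u < w → w < v → ¬ IsGammaMin S Γ w ∧ ¬ IsGammaMax S Γ w) :
    Γ ≤ S v - S u := by
  have ha1 := adj_asc_min hΓ hu hv huv hne
  have ha2 := adj_asc_max hΓ hu hv huv hne
  obtain ⟨s, t, hs1, hs2, hmin3, hs4, hs5⟩ := gammaMin_elim hu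
  obtain ⟨s', t', g1, g2, g3, g4, g5⟩ := hv
  rcases le_or_gt t v with hc | hc
  · have := ha2 t hs2 hc
    linarith
  rcases le_or_gt u s' with hd | hd
  · have := ha1 s' hd g1
    linarith
  rcases le_or_gt s s' with he | he
  · have := hmin3 s' he (by omega)
    linarith
  rcases le_or_gt t t' with hf | hf
  · have := g3 t (by omega) hf
    linarith
  · have := hmin3 t' (by omega) (by omega)
    linarith

/-- Adjacent min→max: no internal drop of size `Γ` or more. -/
lemma adj_asc_drop (hΓ : 0 < Γ) (hu : IsGammaMin S Γ u) (hv : IsGammaMax S Γ v) (huv : u ≤ v)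
    (hne : ∀ w, u < w → w < v → ¬ IsGammaMin S Γ w ∧ ¬ IsGammaMax S Γ w) :
    ∀ i j, u ≤ i → i ≤ j → j ≤ v → S i - S j < Γ := by
  have ha1 := adj_asc_min hΓ hu hv huv hne
  have ha2 := adj_asc_max hΓ hu hv huv hne
  intro i j hui hij hjv
  by_contra hge
  push_neg at hge
  rcases eq_or_lt_of_le hui with hiu | hiu
  · have := ha1 j (by omega) hjv
    rw [← hiu] at hge
    linarith
  obtain ⟨y, hy1, hy2, hy3⟩ := exists_min_Icc S (show i ≤ v by omega)
  have hyj : S y ≤ S j := hy3 j hij hjv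
  have hSvy : S y + Γ ≤ S v := by
    have := ha2 i (by omega) (by omega)
    linarith
  have hymin : IsGammaMin S Γ y := gammaMin_intro hy1 hy2 hy3 (by linarith) hSvy
  have huy : u < y := by omega
  have hyv : y < v := by
    rcases lt_or_ge y v with hh | hh
    · exact hh
    · have : y = v := by omega
      rw [this] at hSvy
      linarith
  exact (hne y huy hyv).1 hymin

/-- Adjacent min→min: equal values. -/
lemma adj_mm_eq (hΓ : 0 < Γ) (hu : IsGammaMin S Γ u) (hv : IsGammaMin S Γ v) (huv : u ≤ v)
    (hne : ∀ w, u < w → w < v → ¬ IsGammaMin S Γ w ∧ ¬ IsGammaMax S Γ w) :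
    S u = S v := by
  obtain ⟨s, t, hs1, hs2, hmin3, hs4, hs5⟩ := gammaMin_elim hu
  obtain ⟨s', t', g1, g2, g3, g4, g5⟩ := gammaMin_elim hv
  obtain ⟨x, hx1, hx2, hx3⟩ := exists_max_Icc S huv
  have claim1 : ¬ (S u < S v) := by
    intro hlt
    have hus' : u < s' := by
      by_contra hh
      push_neg at hh
      have := g3 u hh (by omega)
      linarith
    have hxs : S s' ≤ S x := hx3 s' (by omega) g1
    have hux : u < x := by
      rcases lt_or_ge u x with hh | hh
      · exact hh
      · have : x = u := by omega
        rw [this] at hxs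
        linarith
    have hxv : x < v := by
      rcases lt_or_ge x v with hh | hh
      · exact hh
      · have : x = v := by omega
        rw [this] at hxs
        linarith
    exact (hne x hux hxv).2 ⟨u, v, by omega, by omega, hx3, by linarith, by linarith⟩
  have claim2 : ¬ (S v < S u) := by
    intro hlt
    have htv : t < v := by
      by_contra hh
      push_neg at hh
      have := hmin3 v (by omega) hh
      linarith
    have hxt : S t ≤ S x := hx3 t hs2 (by omega)
    have hux : u < x := by
      rcases lt_or_ge u x with hh | hh
      · exact hh
      · have : x = u := by omega
        rw [this] at hxt
        linarith
    have hxv : x < v := by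
      rcases lt_or_ge x v with hh | hh
      · exact hh
      · have : x = v := by omega
        rw [this] at hxt
        linarith
    exact (hne x hux hxv).2 ⟨u, v, by omega, by omega, hx3, by linarith, by linarith⟩
  rcases lt_trichotomy (S u) (S v) with hh | hh | hh
  · exact absurd hh claim1
  · exact hh
  · exact absurd hh claim2

/-- Adjacent min→min: both ends are minima of the stretch. -/
lemma adj_mm_min (hΓ : 0 < Γ) (hu : IsGammaMin S Γ u) (hv : IsGammaMin S Γ v) (huv : u ≤ v)
    (hne : ∀ w, u < w → w < v → ¬ IsGammaMin S Γ w ∧ ¬ IsGammaMax S Γ w) :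
    ∀ i, u ≤ i → i ≤ v → S u ≤ S i := by
  have heq := adj_mm_eq hΓ hu hv huv hne
  obtain ⟨y, hy1, hy2, hy3⟩ := exists_min_Icc S huv
  suffices hy : S u ≤ S y by
    intro i h1 h2
    linarith [hy3 i h1 h2]
  by_contra hlt
  push_neg at hlt
  obtain ⟨s, t, hs1, hs2, hmin3, hs4, hs5⟩ := gammaMin_elim hu
  obtain ⟨s', t', g1, g2, g3, g4, g5⟩ := gammaMin_elim hv
  have hty : t < y := by
    by_contra hh
    push_neg at hh
    have := hmin3 y (by omega) hh
    linarith
  have hymin : IsGammaMin S Γ y := by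
    refine gammaMin_intro (by omega : t ≤ y) (by omega : y ≤ t') ?_ (by linarith) (by linarith)
    intro k h1 h2
    rcases le_or_gt k v with hk | hk
    · exact hy3 k (by omega) hk
    · have := g3 k (by omega) h2
      linarith
  have huy : u < y := by omega
  have hyv : y < v := by
    rcases lt_or_ge y v with hh | hh
    · exact hh
    · have : y = v := by omega
      rw [this] at hlt
      linarith
  exact (hne y huy hyv).1 hymin

/-- Adjacent min→min: the stretch stays strictly below `S u + Γ`. -/
lemma adj_mm_max (hΓ : 0 < Γ) (hu : IsGammaMin S Γ u) (hv : IsGammaMin S Γ v) (huv : u ≤ v)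
    (hne : ∀ w, u < w → w < v → ¬ IsGammaMin S Γ w ∧ ¬ IsGammaMax S Γ w) :
    ∀ i, u ≤ i → i ≤ v → S i < S u + Γ := by
  have heq := adj_mm_eq hΓ hu hv huv hne
  obtain ⟨x, hx1, hx2, hx3⟩ := exists_max_Icc S huv
  suffices hx : S x < S u + Γ by
    intro i h1 h2
    linarith [hx3 i h1 h2]
  by_contra hge
  push_neg at hge
  have hux : u < x := by
    rcases lt_or_ge u x with hh | hh
    · exact hh
    · have : x = u := by omega
      rw [this] at hge
      linarith
  have hxv : x < v := by
    rcases lt_or_ge x v with hh | hh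
    · exact hh
    · have : x = v := by omega
      rw [this] at hge
      linarith
  exact (hne x hux hxv).2 ⟨u, v, by omega, by omega, hx3, by linarith, by linarith⟩

end Extrema

section Main

variable {S h L R : ℤ → ℝ}

/-- Main computation on an ascending adjacent stretch `u < n ≤ v`. -/
lemma main_asc (hΓ : 0 < Γ)
    (hs : ∀ k : ℤ, S k - S (k-1) = h k)
    (hL : ∀ k : ℤ, L k = hatb Γ (L (k - 1) + 2 * h k))
    (hR : ∀ k : ℤ, R k = hatb Γ (R (k + 1) + 2 * h k))
    {u v n : ℤ} (hu : IsGammaMin S Γ u) (hv : IsGammaMax S Γ v)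
    (hun : u < n) (hnv : n ≤ v)
    (hne : ∀ w, u < w → w < v → ¬ IsGammaMin S Γ w ∧ ¬ IsGammaMax S Γ w) :
    (S v - S u ≤ Γ → L (n-1) + 2 * h n + R (n+1) = 0) ∧
    (Γ < S v - S u → 0 < L (n-1) + 2 * h n + R (n+1)) := by
  have huv : u ≤ v := by omega
  have ha1 := adj_asc_min hΓ hu hv huv hne
  have ha2 := adj_asc_max hΓ hu hv huv hne
  have hgap := adj_asc_gap hΓ hu hv huv hne
  have hdrop := adj_asc_drop hΓ hu hv huv hne
  obtain ⟨us, ut, hus1, hus2, humin3, hus4, hus5⟩ := gammaMin_elim hu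
  obtain ⟨vs, vt, hvs1, hvs2, hvmax3, hvs4, hvs5⟩ := hv
  have hsn : S n - S (n-1) = h n := hs n
  -- anchor on the left: L u = -Γ
  have hLu : L u = -Γ := by
    obtain ⟨x0, hx01, hx02, hx03⟩ := exists_max_Icc S hus1
    refine FRbot hΓ hs hL hx02
      (fun i h1 h2 => hx03 i (by omega) h2)
      (fun i h1 h2 => humin3 i (by omega) (by omega)) ?_
    have := hx03 us le_rfl hus1
    linarith
  -- anchor on the right: R (v+1) = -Γ
  have hRv : R (v+1) = -Γ := by
    obtain ⟨y0, hy01, hy02, hy03⟩ := exists_min_Icc S hvs2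
    refine BRbot hΓ hs hR hy01
      (fun i h1 h2 => hvmax3 i (by omega) (by omega))
      (fun i h1 h2 => hy03 i h1 (by omega)) ?_
    have := hy03 vt hvs2 le_rfl
    linarith
  constructor
  · -- the exact-Γ case
    intro hle
    obtain ⟨y, hy1, hy2, hy3, hy4⟩ := FPbot hΓ hs hL (show u ≤ n-1 by omega) hLu
      (fun k hk1 hk2 i hi1 hi2 => by
        have e1 := ha2 k (by omega) (by omega)
        have e2 := ha1 i hi1 (by omega)
        linarith)
    have hyu : S y = S u :=
      le_antisymm (hy3 u le_rfl (by omega)) (ha1 y hy1 (by omega))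
    obtain ⟨x, hx1, hx2, hx3, hx4⟩ := BPbot hΓ hs hR (show n ≤ v by omega) hRv
      (fun k hk1 hk2 i hi1 hi2 => by
        have e1 := ha2 i (by omega) hi2
        have e2 := ha1 k (by omega) (by omega)
        linarith)
    have hxv : S x = S v :=
      le_antisymm (ha2 x (by omega) hx2) (hx3 v (by omega) le_rfl)
    rw [hy4, hx4, hyu, hxv]
    linarith
  · -- the strict case
    intro hgt
    obtain ⟨x, hxm1, hxm2, hxm3⟩ := exists_max_Icc S (show u ≤ n-1 by omega)
    obtain ⟨z, hzm1, hzm2, hzm3⟩ := exists_min_Icc S (show n ≤ v by omega)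
    have hLval : (L (n-1) = -Γ + 2*(S (n-1) - S u) ∧ S x - S u ≤ Γ) ∨
        (L (n-1) = Γ - 2*(S x - S (n-1)) ∧ Γ ≤ S x - S u) := by
      rcases le_or_gt (S x - S u) Γ with hc | hc
      · left
        refine ⟨?_, hc⟩
        obtain ⟨y, hy1, hy2, hy3, hy4⟩ := FPbot hΓ hs hL (show u ≤ n-1 by omega) hLu
          (fun k hk1 hk2 i hi1 hi2 => by
            have e1 := hxm3 k (by omega) hk2
            have e2 := ha1 i hi1 (by omega)
            linarith)
        have hyu : S y = S u :=
          le_antisymm (hy3 u le_rfl (by omega)) (ha1 y hy1 (by omega))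
        rw [hy4, hyu]
      · right
        refine ⟨?_, le_of_lt hc⟩
        have hLx : L x = Γ := FRtop hΓ hs hL hxm1
          (fun i h1 h2 => ha1 i h1 (by omega))
          (fun i h1 h2 => hxm3 i h1 (by omega))
          (by linarith)
        obtain ⟨x', h1, h2, h3, h4⟩ := FPtop hΓ hs hL hxm2 hLx
          (fun k hk1 hk2 i hi1 hi2 => by
            have := hdrop i k (by omega) hi2 (by omega)
            linarith)
        have hx'x : S x' = S x :=
          le_antisymm (hxm3 x' (by omega) h2) (h3 x le_rfl hxm2)
        rw [h4, hx'x]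
    have hRval : (R (n+1) = Γ - 2*(S n - S z) ∧ Γ ≤ S v - S z) ∨
        (R (n+1) = -Γ + 2*(S v - S n) ∧ S v - S z ≤ Γ) := by
      rcases le_or_gt Γ (S v - S z) with hc | hc
      · left
        refine ⟨?_, hc⟩
        have hRz : R (z+1) = Γ := BRtop hΓ hs hR hzm2
          (fun i h1 h2 => hzm3 i (by omega) h2)
          (fun i h1 h2 => ha2 i (by omega) h2)
          (by linarith)
        obtain ⟨y', h1, h2, h3, h4⟩ := BPtop hΓ hs hR hzm1 hRz
          (fun k hk1 hk2 i hi1 hi2 => by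
            have := hdrop k i (by omega) hi1 (by omega)
            linarith)
        have hy'z : S y' = S z :=
          le_antisymm (h3 z hzm1 le_rfl) (hzm3 y' h1 (by omega))
        rw [h4, hy'z]
      · right
        refine ⟨?_, le_of_lt hc⟩
        obtain ⟨x'', h1, h2, h3, h4⟩ := BPbot hΓ hs hR (show n ≤ v by omega) hRv
          (fun k hk1 hk2 i hi1 hi2 => by
            have e1 := ha2 i (by omega) hi2
            have e2 := hzm3 k hk1 hk2
            linarith)
        have hx''v : S x'' = S v :=
          le_antisymm (ha2 x'' (by omega) h2) (h3 v (by omega) le_rfl)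
        rw [h4, hx''v]
    rcases hLval with ⟨hLf, hLc⟩ | ⟨hLf, hLc⟩ <;> rcases hRval with ⟨hRf, hRc⟩ | ⟨hRf, hRc⟩
    · -- both soft: Σ = 2 (S z - S u) > 0
      have hzu : S u < S z := by
        rcases lt_or_ge (S u) (S z) with hh | hh
        · exact hh
        exfalso
        have hzu' : S z = S u := le_antisymm hh (ha1 z (by omega) hzm2)
        have hzmin : IsGammaMin S Γ z := by
          refine gammaMin_intro (show us ≤ z by omega) (show z ≤ v by omega)
            ?_ (by linarith) (by linarith)
          intro i h1 h2
          rcases le_or_gt i u with hi | hi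
          · have := humin3 i h1 (by omega)
            linarith
          · have := ha1 i (by omega) h2
            linarith
        have hzv : z < v := by
          rcases lt_or_ge z v with hh' | hh'
          · exact hh'
          · have : z = v := by omega
            rw [this] at hzu'
            linarith
        exact (hne z (by omega) hzv).1 hzmin
      rw [hLf, hRf]
      linarith
    · rw [hLf, hRf]
      linarith
    · have := hdrop x z (by omega) (by omega) (by omega)
      rw [hLf, hRf]
      linarith
    · -- hard top & soft right: Σ = 2 (S v - S x) > 0
      have hxv : S x < S v := by
        rcases lt_or_ge (S x) (S v) with hh | hh
        · exact hh
        exfalso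
        have hxv' : S x = S v := le_antisymm (ha2 x (by omega) (by omega)) hh
        have hxmax : IsGammaMax S Γ x := by
          refine ⟨u, vt, by omega, by omega, ?_, by linarith, by linarith⟩
          intro i h1 h2
          rcases le_or_gt i v with hi | hi
          · have := ha2 i h1 hi
            linarith
          · have := hvmax3 i (by omega) h2
            linarith
        have hux : u < x := by
          rcases lt_or_ge u x with hh' | hh'
          · exact hh'
          · have : x = u := by omega
            rw [this] at hxv'
            linarith
        exact (hne x hux (by omega)).2 hxmax
      rw [hLf, hRf]
      linarith

/-- Main computation between two adjacent Γ-minima. -/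
lemma main_mm (hΓ : 0 < Γ)
    (hs : ∀ k : ℤ, S k - S (k-1) = h k)
    (hL : ∀ k : ℤ, L k = hatb Γ (L (k - 1) + 2 * h k))
    (hR : ∀ k : ℤ, R k = hatb Γ (R (k + 1) + 2 * h k))
    {u v n : ℤ} (hu : IsGammaMin S Γ u) (hv : IsGammaMin S Γ v)
    (hun : u < n) (hnv : n ≤ v)
    (hne : ∀ w, u < w → w < v → ¬ IsGammaMin S Γ w ∧ ¬ IsGammaMax S Γ w) :
    L (n-1) + 2 * h n + R (n+1) = 0 := by
  have huv : u ≤ v := by omega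
  have heq := adj_mm_eq hΓ hu hv huv hne
  have hm1 := adj_mm_min hΓ hu hv huv hne
  have hm2 := adj_mm_max hΓ hu hv huv hne
  obtain ⟨us, ut, hus1, hus2, humin3, hus4, hus5⟩ := gammaMin_elim hu
  obtain ⟨vs, vt, hvs1, hvs2, hvmin3, hvs4, hvs5⟩ := gammaMin_elim hv
  have hsn : S n - S (n-1) = h n := hs n
  have hLu : L u = -Γ := by
    obtain ⟨x0, hx01, hx02, hx03⟩ := exists_max_Icc S hus1
    refine FRbot hΓ hs hL hx02
      (fun i h1 h2 => hx03 i (by omega) h2)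
      (fun i h1 h2 => humin3 i (by omega) (by omega)) ?_
    have := hx03 us le_rfl hus1
    linarith
  have hRv : R (v+1) = Γ := by
    obtain ⟨y0, hy01, hy02, hy03⟩ := exists_max_Icc S hvs2
    refine BRtop hΓ hs hR hy01
      (fun i h1 h2 => hvmin3 i (by omega) (by omega))
      (fun i h1 h2 => hy03 i h1 (by omega)) ?_
    have := hy03 vt hvs2 le_rfl
    linarith
  obtain ⟨y, hy1, hy2, hy3, hy4⟩ := FPbot hΓ hs hL (show u ≤ n-1 by omega) hLu
    (fun k hk1 hk2 i hi1 hi2 => by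
      have e1 := hm2 k (by omega) (by omega)
      have e2 := hm1 i hi1 (by omega)
      linarith)
  have hyu : S y = S u :=
    le_antisymm (hy3 u le_rfl (by omega)) (hm1 y hy1 (by omega))
  obtain ⟨y', h1, h2, h3, h4⟩ := BPtop hΓ hs hR (show n ≤ v by omega) hRv
    (fun k hk1 hk2 i hi1 hi2 => by
      have e1 := hm2 k (by omega) (by omega)
      have e2 := hm1 i (by omega) hi2
      linarith)
  have hy'u : S y' = S u := by
    have e1 := h3 v (by omega) le_rfl
    have e2 := hm1 y' (by omega) h2
    linarith
  rw [hy4, h4, hyu, hy'u]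
  linarith

end Main

section Exists

variable {S : ℤ → ℝ}

lemma low_left (hosc4 : ∀ M : ℝ, ∃ n : ℤ, n < 0 ∧ S n < -M) (b : ℤ) (M : ℝ) :
    ∃ p : ℤ, p < b ∧ S p < M := by
  rcases le_or_gt 0 b with hb | hb
  · obtain ⟨p, hp1, hp2⟩ := hosc4 (-M)
    exact ⟨p, by omega, by linarith⟩
  · have hne : (Finset.Icc b (-1 : ℤ)).Nonempty := by
      rw [Finset.nonempty_Icc]; omega
    set C := (Finset.Icc b (-1 : ℤ)).inf' hne S with hC
    obtain ⟨p, hp1, hp2⟩ := hosc4 (max (-M) (-C + 1))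
    have hpM : S p < M := by
      have := le_max_left (-M) (-C + 1); linarith
    have hpC : S p < C := by
      have := le_max_right (-M) (-C + 1); linarith
    refine ⟨p, ?_, hpM⟩
    by_contra hh
    push_neg at hh
    have : C ≤ S p := Finset.inf'_le S (Finset.mem_Icc.mpr ⟨hh, by omega⟩)
    linarith

lemma high_left (hosc3 : ∀ M : ℝ, ∃ n : ℤ, n < 0 ∧ M < S n) (b : ℤ) (M : ℝ) :
    ∃ p : ℤ, p < b ∧ M < S p := by
  rcases le_or_gt 0 b with hb | hb
  · obtain ⟨p, hp1, hp2⟩ := hosc3 M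
    exact ⟨p, by omega, hp2⟩
  · have hne : (Finset.Icc b (-1 : ℤ)).Nonempty := by
      rw [Finset.nonempty_Icc]; omega
    set C := (Finset.Icc b (-1 : ℤ)).sup' hne S with hC
    obtain ⟨p, hp1, hp2⟩ := hosc3 (max M (C + 1))
    have hpM : M < S p := by
      have := le_max_left M (C + 1); linarith
    have hpC : C < S p := by
      have := le_max_right M (C + 1); linarith
    refine ⟨p, ?_, hpM⟩
    by_contra hh
    push_neg at hh
    have : S p ≤ C := Finset.le_sup' S (Finset.mem_Icc.mpr ⟨hh, by omega⟩)
    linarith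

lemma low_right (hosc2 : ∀ M : ℝ, ∃ n : ℤ, 0 < n ∧ S n < -M) (b : ℤ) (M : ℝ) :
    ∃ p : ℤ, b < p ∧ S p < M := by
  rcases le_or_gt b 0 with hb | hb
  · obtain ⟨p, hp1, hp2⟩ := hosc2 (-M)
    exact ⟨p, by omega, by linarith⟩
  · have hne : (Finset.Icc (1 : ℤ) b).Nonempty := by
      rw [Finset.nonempty_Icc]; omega
    set C := (Finset.Icc (1 : ℤ) b).inf' hne S with hC
    obtain ⟨p, hp1, hp2⟩ := hosc2 (max (-M) (-C + 1))
    have hpM : S p < M := by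
      have := le_max_left (-M) (-C + 1); linarith
    have hpC : S p < C := by
      have := le_max_right (-M) (-C + 1); linarith
    refine ⟨p, ?_, hpM⟩
    by_contra hh
    push_neg at hh
    have : C ≤ S p := Finset.inf'_le S (Finset.mem_Icc.mpr ⟨by omega, hh⟩)
    linarith

lemma high_right (hosc1 : ∀ M : ℝ, ∃ n : ℤ, 0 < n ∧ M < S n) (b : ℤ) (M : ℝ) :
    ∃ p : ℤ, b < p ∧ M < S p := by
  rcases le_or_gt b 0 with hb | hb
  · obtain ⟨p, hp1, hp2⟩ := hosc1 M
    exact ⟨p, by omega, hp2⟩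
  · have hne : (Finset.Icc (1 : ℤ) b).Nonempty := by
      rw [Finset.nonempty_Icc]; omega
    set C := (Finset.Icc (1 : ℤ) b).sup' hne S with hC
    obtain ⟨p, hp1, hp2⟩ := hosc1 (max M (C + 1))
    have hpM : M < S p := by
      have := le_max_left M (C + 1); linarith
    have hpC : C < S p := by
      have := le_max_right M (C + 1); linarith
    refine ⟨p, ?_, hpM⟩
    by_contra hh
    push_neg at hh
    have : S p ≤ C := Finset.le_sup' S (Finset.mem_Icc.mpr ⟨by omega, hh⟩)
    linarith

lemma exists_gmin_lt (hΓ : 0 < Γ)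
    (hlow : ∀ (b : ℤ) (M : ℝ), ∃ p, p < b ∧ S p < M)
    (hhigh : ∀ (b : ℤ) (M : ℝ), ∃ p, p < b ∧ M < S p) (a : ℤ) :
    ∃ w, w < a ∧ IsGammaMin S Γ w := by
  obtain ⟨q, hq1, hq2⟩ := hlow (a - 1) (S (a - 1) - Γ)
  obtain ⟨p, hp1, hp2⟩ := hhigh q (S (a - 1))
  obtain ⟨w, hw1, hw2, hw3⟩ := exists_min_Icc S (show p ≤ a - 1 by omega)
  have hwq : S w ≤ S q := hw3 q (by omega) (by omega)
  exact ⟨w, by omega, gammaMin_intro hw1 hw2 hw3 (by linarith) (by linarith)⟩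

lemma exists_gmin_gt (hΓ : 0 < Γ)
    (hlow : ∀ (b : ℤ) (M : ℝ), ∃ p, b < p ∧ S p < M)
    (hhigh : ∀ (b : ℤ) (M : ℝ), ∃ p, b < p ∧ M < S p) (a : ℤ) :
    ∃ w, a < w ∧ IsGammaMin S Γ w := by
  obtain ⟨q, hq1, hq2⟩ := hlow (a + 1) (S (a + 1) - Γ)
  obtain ⟨r, hr1, hr2⟩ := hhigh q (S (a + 1))
  obtain ⟨w, hw1, hw2, hw3⟩ := exists_min_Icc S (show a + 1 ≤ r by omega)
  have hwq : S w ≤ S q := hw3 q (by omega) (by omega)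
  exact ⟨w, by omega, gammaMin_intro hw1 hw2 hw3 (by linarith) (by linarith)⟩

lemma fisher_forces {u v n : ℤ}
    (hu : IsGammaMin S Γ u ∨ IsGammaMax S Γ u)
    (hv : IsGammaMin S Γ v ∨ IsGammaMax S Γ v)
    (hun : u < n) (hnv : n ≤ v)
    (hne : ∀ w, u < w → w < v → ¬ IsGammaMin S Γ w ∧ ¬ IsGammaMax S Γ w)
    (hF : FisherPlus S Γ n) :
    IsGammaMin S Γ u ∧ IsGammaMax S Γ v ∧ Γ < S v - S u := by
  obtain ⟨u', v', f1, f2, f3, f4, f5, f6⟩ := hF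
  have huu : u' = u := by
    rcases lt_trichotomy u' u with hc | hc | hc
    · exfalso
      have := f6 u hc (by omega)
      rcases hu with g | g
      · exact this.1 g
      · exact this.2 g
    · exact hc
    · exact absurd f1 (hne u' hc (by omega)).1
  have hvv : v' = v := by
    rcases lt_trichotomy v' v with hc | hc | hc
    · exact absurd f2 (hne v' (by omega) hc).2
    · exact hc
    · exfalso
      have := f6 v (by omega) hc
      rcases hv with g | g
      · exact this.1 g
      · exact this.2 g
  subst huu
  subst hvv
  exact ⟨f1, f2, f5⟩

end Exists

end Fisher16

open Fisher16 in
/-- For the hard-wall reflected chains `\widehat{l}` (forward) and `\widehat{r}`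
(backward) driven by a field whose walk `S` oscillates unboundedly in both
directions, at every site `n` one has
`sign(\widehat{l}_{n-1} + 2h_n + \widehat{r}_{n+1}) = s^{(F)}_n`
(with the convention `sign 0 = 0`). -/
theorem stmt_16 (Γ : ℝ) (hΓ : 0 < Γ) (h S : ℤ → ℝ)
    (hS0 : S 0 = 0) (hSrec : ∀ n : ℤ, S n - S (n - 1) = h n)
    (hosc1 : ∀ M : ℝ, ∃ n : ℤ, 0 < n ∧ M < S n)
    (hosc2 : ∀ M : ℝ, ∃ n : ℤ, 0 < n ∧ S n < -M)
    (hosc3 : ∀ M : ℝ, ∃ n : ℤ, n < 0 ∧ M < S n)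
    (hosc4 : ∀ M : ℝ, ∃ n : ℤ, n < 0 ∧ S n < -M)
    (L R : ℤ → ℝ)
    (hL : ∀ n : ℤ, L n = hatb Γ (L (n - 1) + 2 * h n))
    (hR : ∀ n : ℤ, R n = hatb Γ (R (n + 1) + 2 * h n))
    (n : ℤ) :
    Real.sign (L (n - 1) + 2 * h n + R (n + 1)) = fisherConfig S Γ n := by
  have hs : ∀ k : ℤ, S k - S (k - 1) = h k := hSrec
  -- locate the adjacent Γ-extrema around n
  obtain ⟨w1, hw11, hw12⟩ :=
    exists_gmin_lt hΓ (low_left hosc4) (high_left hosc3) n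
  obtain ⟨w2, hw21, hw22⟩ :=
    exists_gmin_gt hΓ (low_right hosc2) (high_right hosc1) (n - 1)
  obtain ⟨u, ⟨huext, hun'⟩, humax⟩ := Int.exists_greatest_of_bdd
    (P := fun w => (IsGammaMin S Γ w ∨ IsGammaMax S Γ w) ∧ w ≤ n - 1)
    ⟨n - 1, fun z hz => hz.2⟩ ⟨w1, Or.inl hw12, by omega⟩
  obtain ⟨v, ⟨hvext, hnv⟩, hvmin⟩ := Int.exists_least_of_bdd
    (P := fun w => (IsGammaMin S Γ w ∨ IsGammaMax S Γ w) ∧ n ≤ w)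
    ⟨n, fun z hz => hz.2⟩ ⟨w2, Or.inl hw22, by omega⟩
  have hun : u < n := by omega
  have hne : ∀ w, u < w → w < v → ¬ IsGammaMin S Γ w ∧ ¬ IsGammaMax S Γ w := by
    intro w h1 h2
    constructor
    · intro hm
      rcases le_or_gt w (n - 1) with hc | hc
      · have := humax w ⟨Or.inl hm, hc⟩
        omega
      · have := hvmin w ⟨Or.inl hm, by omega⟩
        omega
    · intro hm
      rcases le_or_gt w (n - 1) with hc | hc
      · have := humax w ⟨Or.inr hm, hc⟩
        omega
      · have := hvmin w ⟨Or.inr hm, by omega⟩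
        omega
  have hne' : ∀ w, u < w → w < v →
      ¬ IsGammaMin (fun m => -S m) Γ w ∧ ¬ IsGammaMax (fun m => -S m) Γ w := by
    intro w h1 h2
    exact ⟨fun g => (hne w h1 h2).2 (isGammaMin_neg.mp g),
      fun g => (hne w h1 h2).1 (isGammaMax_neg.mp g)⟩
  rcases huext with humin | humax2 <;> rcases hvext with hvmin2 | hvmax2
  · -- u min, v min
    have hSig := main_mm hΓ hs hL hR humin hvmin2 hun hnv hne
    have hFP : ¬ FisherPlus S Γ n := by
      intro hF
      obtain ⟨_, hmax, _⟩ := fisher_forces (Or.inl humin) (Or.inl hvmin2) hun hnv hne hF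
      exact not_min_and_max hΓ hvmin2 hmax
    have hFM : ¬ FisherMinus S Γ n := by
      intro hF
      obtain ⟨hmin', _, _⟩ := fisher_forces (S := fun m => -S m)
        (Or.inr (isGammaMax_neg.mpr humin)) (Or.inr (isGammaMax_neg.mpr hvmin2))
        hun hnv hne' hF
      exact not_min_and_max hΓ humin (isGammaMin_neg.mp hmin')
    rw [hSig, Real.sign_zero]
    simp [fisherConfig, hFP, hFM]
  · -- u min, v max: ascending stretch
    have hma := main_asc hΓ hs hL hR humin hvmax2 hun hnv hne
    rcases le_or_gt (S v - S u) Γ with hc | hc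
    · have hSig := hma.1 hc
      have hFP : ¬ FisherPlus S Γ n := by
        intro hF
        obtain ⟨_, _, hgt⟩ := fisher_forces (Or.inl humin) (Or.inr hvmax2) hun hnv hne hF
        linarith
      have hFM : ¬ FisherMinus S Γ n := by
        intro hF
        obtain ⟨hmin', _, _⟩ := fisher_forces (S := fun m => -S m)
          (Or.inr (isGammaMax_neg.mpr humin)) (Or.inl (isGammaMin_neg.mpr hvmax2))
          hun hnv hne' hF
        exact not_min_and_max hΓ humin (isGammaMin_neg.mp hmin')
      rw [hSig, Real.sign_zero]
      simp [fisherConfig, hFP, hFM]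
    · have hSig := hma.2 hc
      have hFP : FisherPlus S Γ n := ⟨u, v, humin, hvmax2, hun, hnv, hc, hne⟩
      rw [Real.sign_of_pos hSig]
      simp [fisherConfig, hFP]
  · -- u max, v min: descending stretch
    have humin' : IsGammaMin (fun m => -S m) Γ u := isGammaMin_neg.mpr humax2
    have hvmax' : IsGammaMax (fun m => -S m) Γ v := isGammaMax_neg.mpr hvmin2
    have hma := main_asc hΓ (neg_hs hs) (neg_hL hΓ hL) (neg_hR hΓ hR)
      humin' hvmax' hun hnv hne'
    have hFP : ¬ FisherPlus S Γ n := by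
      intro hF
      obtain ⟨hmin, _, _⟩ := fisher_forces (Or.inr humax2) (Or.inl hvmin2) hun hnv hne hF
      exact not_min_and_max hΓ hmin humax2
    rcases le_or_gt (S u - S v) Γ with hc | hc
    · have hSig' : -L (n-1) + 2 * (-h n) + -R (n+1) = 0 :=
        hma.1 (by show -S v - -S u ≤ Γ; linarith)
      have hSig : L (n-1) + 2 * h n + R (n+1) = 0 := by linarith
      have hFM : ¬ FisherMinus S Γ n := by
        intro hF
        obtain ⟨_, _, hgt⟩ := fisher_forces (S := fun m => -S m)
          (Or.inl humin') (Or.inr hvmax') hun hnv hne' hF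
        have hgt' : Γ < -S v - -S u := hgt
        linarith
      rw [hSig, Real.sign_zero]
      simp [fisherConfig, hFP, hFM]
    · have hSig' : 0 < -L (n-1) + 2 * (-h n) + -R (n+1) :=
        hma.2 (by show Γ < -S v - -S u; linarith)
      have hSig : L (n-1) + 2 * h n + R (n+1) < 0 := by linarith
      have hFM : FisherMinus S Γ n := by
        show FisherPlus (fun m => -S m) Γ n
        exact ⟨u, v, humin', hvmax', hun, hnv, by show Γ < -S v - -S u; linarith, hne'⟩
      rw [Real.sign_of_neg hSig]
      simp [fisherConfig, hFP, hFM]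
  · -- u max, v max
    have humin' : IsGammaMin (fun m => -S m) Γ u := isGammaMin_neg.mpr humax2
    have hvmin' : IsGammaMin (fun m => -S m) Γ v := isGammaMin_neg.mpr hvmax2
    have hSig' : -L (n-1) + 2 * (-h n) + -R (n+1) = 0 :=
      main_mm hΓ (neg_hs hs) (neg_hL hΓ hL) (neg_hR hΓ hR) humin' hvmin' hun hnv hne'
    have hSig : L (n-1) + 2 * h n + R (n+1) = 0 := by linarith
    have hFP : ¬ FisherPlus S Γ n := by
      intro hF
      obtain ⟨hmin, _, _⟩ := fisher_forces (Or.inr humax2) (Or.inr hvmax2) hun hnv hne hF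
      exact not_min_and_max hΓ hmin humax2
    have hFM : ¬ FisherMinus S Γ n := by
      intro hF
      obtain ⟨_, hmax', _⟩ := fisher_forces (S := fun m => -S m)
        (Or.inl humin') (Or.inl hvmin') hun hnv hne' hF
      exact not_min_and_max hΓ (isGammaMax_neg.mp hmax') hvmax2
    rw [hSig, Real.sign_zero]
    simp [fisherConfig, hFP, hFM]
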